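/- The inequality c ≥ (1/n)·b² + (|n−2p|·h/√(n·p(n−p)))·b − h², for nonnegative reals b, h, c and integers n ≥ 2, 1 ≤ p ≤ n−1, is equivalent to b² + n·h² ≤ n·c + n³h²/(2p(n−p)) − n|n−2p|·h·√(n²h²+4c·p(n−p))/(2p(n−p)) (i.e. to |B|² ≤ α(c,p,n,h) with |B|² = b² + n·h²). -/

import Mathlib

/-- The pinching function
`α(c,p,n,h) = n·c + n³h²/(2p(n−p)) − n|n−2p|·h·√(n²h² + 4c·p(n−p))/(2p(n−p))`. -/
noncomputable def pinchAlpha (c : ℝ) (p n : ℕ) (h : ℝ) : ℝ :=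
  n * c + n ^ 3 * h ^ 2 / (2 * p * ((n : ℝ) - p)) -
    n * |(n : ℝ) - 2 * p| * h * Real.sqrt (n ^ 2 * h ^ 2 + 4 * c * p * ((n : ℝ) - p)) /
      (2 * p * ((n : ℝ) - p))

set_option maxHeartbeats 1000000 in
lemma pinch_aux (b h c N q m : ℝ) (hb : 0 ≤ b) (hh : 0 ≤ h) (hc : 0 ≤ c)
    (hN : 0 < N) (hq : 0 < q) (hm : 0 ≤ m) (hm2 : m ^ 2 = N ^ 2 - 4 * q) :
    (1 / N * b ^ 2 + m * h / Real.sqrt (N * q) * b - h ^ 2 ≤ c) ↔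
      b ^ 2 + N * h ^ 2 ≤
        N * c + N ^ 3 * h ^ 2 / (2 * q) -
          N * m * h * Real.sqrt (N ^ 2 * h ^ 2 + 4 * c * q) / (2 * q) := by
  obtain ⟨s, hs_def⟩ : ∃ x, x = Real.sqrt (N * q) := ⟨_, rfl⟩
  obtain ⟨r, hr_def⟩ : ∃ x, x = Real.sqrt (N ^ 2 * h ^ 2 + 4 * c * q) := ⟨_, rfl⟩
  rw [← hs_def, ← hr_def]
  have hspos : 0 < s := hs_def ▸ Real.sqrt_pos.mpr (by positivity)
  have hs2 : s ^ 2 = N * q := hs_def ▸ Real.sq_sqrt (by positivity)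
  have hr2 : r ^ 2 = N ^ 2 * h ^ 2 + 4 * c * q := hr_def ▸ Real.sq_sqrt (by positivity)
  have hrpos : 0 ≤ r := hr_def ▸ Real.sqrt_nonneg _
  obtain ⟨k, hk_def⟩ : ∃ x, x = N * m * h / s := ⟨_, rfl⟩
  have hk : 0 ≤ k := hk_def ▸ by positivity
  have hks : k * s = N * m * h := by
    rw [hk_def]; field_simp
  -- m*h ≤ r
  have hrmh : m * h ≤ r := by
    have h1 : (m * h) ^ 2 ≤ N ^ 2 * h ^ 2 + 4 * c * q := by nlinarith [sq_nonneg h]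
    rw [hr_def]
    calc m * h = Real.sqrt ((m * h) ^ 2) := (Real.sqrt_sq (by positivity)).symm
      _ ≤ _ := Real.sqrt_le_sqrt h1
  -- sqrt of discriminant
  have hDeq : k ^ 2 + 4 * (N * c + N * h ^ 2) = (N * r / s) ^ 2 := by
    have e1 : (k * s) ^ 2 = (N * m * h) ^ 2 := by rw [hks]
    have e2 : ((N * r / s) * s) ^ 2 = (N * r) ^ 2 := by
      field_simp
    have : (k ^ 2 + 4 * (N * c + N * h ^ 2)) * s ^ 2 = (N * r / s) ^ 2 * s ^ 2 := by
      have l : k ^ 2 * s ^ 2 = (N * m * h) ^ 2 := by linear_combination (k * s + N * m * h) * hks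
      have l2 : (N * r / s) ^ 2 * s ^ 2 = (N * r) ^ 2 := by linear_combination e2
      rw [l2]
      linear_combination l + 4 * (N * c + N * h ^ 2) * hs2 + N ^ 2 * h ^ 2 * hm2 - N ^ 2 * hr2
    have hs2ne : s ^ 2 ≠ 0 := by positivity
    exact mul_right_cancel₀ hs2ne this
  have hsqrtD : Real.sqrt (k ^ 2 + 4 * (N * c + N * h ^ 2)) = N * r / s := by
    rw [hDeq, Real.sqrt_sq (by positivity)]
  -- Step A ↔ B
  have eN : N * (1 / N * b ^ 2 + m * h / s * b - h ^ 2) = b ^ 2 + k * b - N * h ^ 2 := by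
    field_simp [hk_def]
    linear_combination (-b) * hks
  have hAB : (1 / N * b ^ 2 + m * h / s * b - h ^ 2 ≤ c) ↔
      b ^ 2 + k * b ≤ N * c + N * h ^ 2 := by
    constructor
    · intro H
      have := mul_le_mul_of_nonneg_left H hN.le
      rw [eN] at this
      linarith
    · intro H
      have h1 : N * (1 / N * b ^ 2 + m * h / s * b - h ^ 2) ≤ N * c := by
        rw [eN]; linarith
      exact le_of_mul_le_mul_left h1 hN
  -- Step B ↔ C
  have hBC : (b ^ 2 + k * b ≤ N * c + N * h ^ 2) ↔ 2 * b + k ≤ N * r / s := by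
    rw [← hsqrtD, Real.le_sqrt (by linarith : (0:ℝ) ≤ 2 * b + k) (by positivity)]
    constructor <;> intro H <;> nlinarith [H]
  -- Step C ↔ D
  have hCD : (2 * b + k ≤ N * r / s) ↔ 2 * b * s + N * m * h ≤ N * r := by
    rw [le_div_iff₀ hspos, show (2 * b + k) * s = 2 * b * s + N * m * h by linear_combination hks]
  -- Step D ↔ F
  have hr2' : N ^ 2 * r ^ 2 = N ^ 2 * (N ^ 2 * h ^ 2 + 4 * c * q) := by rw [hr2]
  have hm2' : N ^ 2 * m ^ 2 * h ^ 2 = N ^ 2 * (N ^ 2 - 4 * q) * h ^ 2 := by rw [hm2]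
  have eF : N * c + N ^ 3 * h ^ 2 / (2 * q) - N * m * h * r / (2 * q)
      = (2 * q * N * c + N ^ 3 * h ^ 2 - N * m * h * r) / (2 * q) := by
    field_simp
  have h2q : (0:ℝ) < 2 * q := by linarith
  have expand : (N * r - N * m * h) ^ 2
      = 2 * N ^ 4 * h ^ 2 + 4 * N ^ 2 * c * q - 4 * N ^ 2 * q * h ^ 2 - 2 * N ^ 2 * m * h * r := by
    linear_combination N ^ 2 * hr2 + N ^ 2 * h ^ 2 * hm2
  have hDF : (2 * b * s + N * m * h ≤ N * r) ↔
      b ^ 2 + N * h ^ 2 ≤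
        N * c + N ^ 3 * h ^ 2 / (2 * q) - N * m * h * r / (2 * q) := by
    rw [eF, le_div_iff₀ h2q]
    constructor
    · intro H
      have hD' : 2 * b * s ≤ N * r - N * m * h := by linarith
      have G : (2 * b * s) ^ 2 ≤ (N * r - N * m * h) ^ 2 :=
        pow_le_pow_left₀ (by positivity) hD' 2
      have G' : 4 * b ^ 2 * (N * q) ≤ (N * r - N * m * h) ^ 2 := by
        have e : (2 * b * s) ^ 2 = 4 * b ^ 2 * s ^ 2 := by ring
        rw [e, hs2] at G
        exact G
      have key2 : (2 * N) * ((b ^ 2 + N * h ^ 2) * (2 * q)) ≤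
          (2 * N) * (2 * q * N * c + N ^ 3 * h ^ 2 - N * m * h * r) := by
        linarith [G', expand]
      exact le_of_mul_le_mul_left key2 (by positivity)
    · intro H
      have key2 : (2 * N) * ((b ^ 2 + N * h ^ 2) * (2 * q)) ≤
          (2 * N) * (2 * q * N * c + N ^ 3 * h ^ 2 - N * m * h * r) :=
        mul_le_mul_of_nonneg_left H (by positivity)
      have G' : 4 * b ^ 2 * (N * q) ≤ (N * r - N * m * h) ^ 2 := by
        linarith [key2, expand]
      have G : (2 * b * s) ^ 2 ≤ (N * r - N * m * h) ^ 2 := by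
        have e : (2 * b * s) ^ 2 = 4 * b ^ 2 * s ^ 2 := by ring
        rw [e, hs2]
        exact G'
      have hsub : 0 ≤ N * r - N * m * h := by
        have := mul_le_mul_of_nonneg_left hrmh hN.le
        linarith
      have : 2 * b * s ≤ N * r - N * m * h := by
        calc 2 * b * s = Real.sqrt ((2 * b * s) ^ 2) := (Real.sqrt_sq (by positivity)).symm
          _ ≤ Real.sqrt ((N * r - N * m * h) ^ 2) := Real.sqrt_le_sqrt G
          _ = N * r - N * m * h := Real.sqrt_sq hsub
      linarith
  rw [hAB, hBC, hCD, hDF]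

/-- For nonnegative reals `b, h, c`, integers `n ≥ 2`, `1 ≤ p ≤ n−1`,
the inequality `c ≥ b²/n + |n−2p|·h·b/√(n·p(n−p)) − h²` is equivalent to
`b² + n·h² ≤ α(c,p,n,h)`. -/
theorem pinching_equivalence (b h c : ℝ) (hb : 0 ≤ b) (hh : 0 ≤ h) (hc : 0 ≤ c)
    (n p : ℕ) (hn : 2 ≤ n) (hp1 : 1 ≤ p) (hp2 : p ≤ n - 1) :
    (1 / n * b ^ 2 + |(n : ℝ) - 2 * p| * h / Real.sqrt (n * p * ((n : ℝ) - p)) * b - h ^ 2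
        ≤ c) ↔
      b ^ 2 + n * h ^ 2 ≤ pinchAlpha c p n h := by
  have hpn : p + 1 ≤ n := by omega
  have hNpos : (0:ℝ) < n := by positivity
  have hp : (1:ℝ) ≤ (p:ℝ) := by exact_mod_cast hp1
  have hnp : (p:ℝ) + 1 ≤ (n:ℝ) := by exact_mod_cast hpn
  have hqpos : (0:ℝ) < (p:ℝ) * ((n:ℝ) - p) := by nlinarith
  have hm2 : |(n : ℝ) - 2 * p| ^ 2 = (n:ℝ) ^ 2 - 4 * ((p:ℝ) * ((n:ℝ) - p)) := by
    rw [sq_abs]; ring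
  have key := pinch_aux b h c (n:ℝ) ((p:ℝ) * ((n:ℝ) - p)) |(n : ℝ) - 2 * p|
    hb hh hc hNpos hqpos (abs_nonneg _) hm2
  rw [show (n:ℝ) * ((p:ℝ) * ((n:ℝ) - p)) = (n:ℝ) * p * ((n:ℝ) - p) by ring] at key
  rw [key, pinchAlpha]
  have e1 : (n:ℝ) ^ 2 * h ^ 2 + 4 * c * ((p:ℝ) * ((n:ℝ) - p))
      = (n:ℝ) ^ 2 * h ^ 2 + 4 * c * p * ((n:ℝ) - p) := by ring
  have e2 : 2 * ((p:ℝ) * ((n:ℝ) - p)) = 2 * (p:ℝ) * ((n:ℝ) - p) := by ring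
  rw [e1, e2]
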